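/- Take T = 1 in the previous setting: draw x_0^{[j]} i.i.d. from p(x_0), then x_1^{[j]} i.i.d. from a positive proposal g, and set w_1^{[j]} = (1/N) p(y_1|x_1^{[j]}) · (1/L)∑_{l=1}^L p(x_1^{[j]}|x_0^{[k_{l,j}]}) / g(x_1^{[j]}). Then E[∑_{j=1}^N w_1^{[j]}] = ∫∫ p(y_1|x_1) p(x_1|x_0) p(x_0) dx_1 dx_0 = p(y_1). (One-step unbiasedness of the DPF with multiple matching.) -/

import Mathlib

open MeasureTheory Finset
open Fin.NatCast
open scoped ENNReal

lemma lint_pi_prod {n : ℕ} (f : Fin n → ℝ → ℝ≥0∞) (hf : ∀ i, Measurable (f i)) :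
    ∫⁻ x : Fin n → ℝ, ∏ i, f i (x i) = ∏ i, ∫⁻ x, f i x := by
  induction n with
  | zero =>
      simp [MeasureTheory.volume_pi, lintegral_const, Measure.pi_empty_univ]
  | succ n ih =>
      have A := (measurePreserving_piFinSuccAbove
        (fun _ : Fin (n + 1) => (volume : Measure ℝ)) 0).symm
      have hmeas : Measurable fun x : Fin (n + 1) → ℝ => ∏ i, f i (x i) :=
        Finset.measurable_prod _ fun i _ => (hf i).comp (measurable_pi_apply i)
      rw [MeasureTheory.volume_pi, ← A.lintegral_comp hmeas]
      have key : ∀ a : ℝ × (Fin n → ℝ),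
          ∏ i : Fin (n + 1), f i ((MeasurableEquiv.piFinSuccAbove (fun _ => ℝ) 0).symm a i)
            = f 0 a.1 * ∏ i : Fin n, f i.succ (a.2 i) := by
        intro a
        rw [Fin.prod_univ_succ]
        congr 1
      simp_rw [key]
      have hg2 : Measurable fun y : Fin n → ℝ => ∏ i : Fin n, f i.succ (y i) :=
        Finset.measurable_prod _ fun i _ => (hf i.succ).comp (measurable_pi_apply i)
      rw [lintegral_prod_mul (hf 0).aemeasurable hg2.aemeasurable]
      rw [show (Measure.pi fun _ : Fin n => (volume : Measure ℝ)) = volume from rfl,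
        ih (fun i => f i.succ) (fun i => hf i.succ), Fin.prod_univ_succ]

lemma lint_pi_marg {n : ℕ} (d h : ℝ → ℝ≥0∞) (hd : Measurable d) (hh : Measurable h)
    (hd1 : ∫⁻ x, d x = 1) (i₀ : Fin n) :
    ∫⁻ x : Fin n → ℝ, (∏ i, d (x i)) * h (x i₀) = ∫⁻ x, d x * h x := by
  classical
  set G : Fin n → ℝ → ℝ≥0∞ := fun i => if i = i₀ then fun y => d y * h y else d with hGdef
  have hG : ∀ i : Fin n, Measurable (G i) := by
    intro i
    by_cases hi : i = i₀
    · simp only [hGdef, hi, if_pos rfl]; exact hd.mul hh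
    · simp only [hGdef, if_neg hi]; exact hd
  have key : ∀ x : Fin n → ℝ, (∏ i, d (x i)) * h (x i₀) = ∏ i, G i (x i) := by
    intro x
    have h1 : ∏ i, G i (x i) = (d (x i₀) * h (x i₀)) * ∏ i ∈ univ.erase i₀, d (x i) := by
      rw [← Finset.mul_prod_erase univ _ (mem_univ i₀)]
      have : G i₀ = fun y => d y * h y := by simp [hGdef]
      rw [this]
      congr 1
      exact Finset.prod_congr rfl fun i hi => by
        simp [hGdef, if_neg (Finset.ne_of_mem_erase hi)]
    rw [h1, ← Finset.mul_prod_erase univ (fun i => d (x i)) (mem_univ i₀)]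
    ring
  simp_rw [key]
  rw [lint_pi_prod _ hG, ← Finset.mul_prod_erase univ _ (mem_univ i₀),
    Finset.prod_eq_one (fun i hi => by
      rw [show G i = d by simp [hGdef, Finset.ne_of_mem_erase hi]]; exact hd1), mul_one,
    show G i₀ = fun y => d y * h y by simp [hGdef]]

/-- One-step (`T = 1`) unbiasedness of the DPF with `L` cyclic-permutation
matches.  Initial particles `a j` are i.i.d. from `p0`, new particles `b j`
are i.i.d. from the positive proposal `g`, and
`w_1^{[j]} = (1/N) p(y_1|b_j) (1/L) ∑_l p(b_j | a_{k_{l,j}}) / g(b_j)`.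
Then `E[∑_j w_1^{[j]}] = ∫∫ p(y_1|x_1) p(x_1|x_0) p(x_0) dx_1 dx_0 = p(y_1)`. -/
theorem dpf_one_step_unbiased
    (N L : ℕ) [NeZero N] (hL1 : 1 ≤ L) (hLN : L ≤ N)
    (p0 : ℝ → ℝ) (ptrans : ℝ → ℝ → ℝ) (pobs : ℝ → ℝ) (g : ℝ → ℝ)
    (hp0 : Measurable p0) (hp00 : ∀ x, 0 ≤ p0 x) (hp0dens : ∫ x, p0 x = 1)
    (hptrans : Measurable fun q : ℝ × ℝ => ptrans q.1 q.2)
    (hptrans0 : ∀ x x', 0 ≤ ptrans x x')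
    (hptransdens : ∀ x', ∫ x, ptrans x' x = 1)
    (hpobs : Measurable pobs) (hpobs0 : ∀ x, 0 ≤ pobs x)
    (hg : Measurable g) (hg0 : ∀ x, 0 ≤ g x) (hgdens : ∫ x, g x = 1)
    (hgpos : ∀ x1, 0 < pobs x1 * ∫ x0, ptrans x0 x1 * p0 x0 → 0 < g x1)
    (hfin : Integrable (fun q : ℝ × ℝ => pobs q.2 * ptrans q.1 q.2 * p0 q.1) volume) :
    ∫ a : Fin N → ℝ, ∫ b : Fin N → ℝ,
        (∑ j : Fin N, (N : ℝ)⁻¹ * pobs (b j) *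
            ((L : ℝ)⁻¹ * ∑ l ∈ Finset.range L, ptrans (a (j + (l : Fin N))) (b j))
              / g (b j)) *
          ((∏ j : Fin N, p0 (a j)) * ∏ j : Fin N, g (b j))
      = ∫ x0 : ℝ, ∫ x1 : ℝ, pobs x1 * ptrans x0 x1 * p0 x0 := by
  classical
  have hLpos : 0 < L := hL1
  have hNpos : 0 < N := Nat.pos_of_ne_zero (NeZero.ne N)
  set c : ℝ := (N : ℝ)⁻¹ * (L : ℝ)⁻¹ with hc
  have hc0 : 0 ≤ c := by positivity
  set F : (Fin N → ℝ) → (Fin N → ℝ) → ℝ := fun a b =>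
    (∑ j : Fin N, (N : ℝ)⁻¹ * pobs (b j) *
        ((L : ℝ)⁻¹ * ∑ l ∈ Finset.range L, ptrans (a (j + (l : Fin N))) (b j)) / g (b j)) *
      ((∏ j : Fin N, p0 (a j)) * ∏ j : Fin N, g (b j)) with hFdef
  have hFnn : ∀ a b, 0 ≤ F a b := by
    intro a b
    apply mul_nonneg
    · exact Finset.sum_nonneg fun j _ => div_nonneg (mul_nonneg
        (mul_nonneg (by positivity) (hpobs0 _))
        (mul_nonneg (by positivity) (Finset.sum_nonneg fun l _ => hptrans0 _ _))) (hg0 _)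
    · exact mul_nonneg (Finset.prod_nonneg fun j _ => hp00 _)
        (Finset.prod_nonneg fun j _ => hg0 _)
  have hFmeas : Measurable fun q : (Fin N → ℝ) × (Fin N → ℝ) => F q.1 q.2 := by
    apply Measurable.mul
    · apply Finset.measurable_sum
      intro j _
      apply Measurable.div
      · apply Measurable.mul
        · exact measurable_const.mul (hpobs.comp ((measurable_pi_apply j).comp measurable_snd))
        · apply Measurable.mul measurable_const
          apply Finset.measurable_sum
          intro l _
          exact hptrans.comp (Measurable.prodMk
            ((measurable_pi_apply (j + (l : Fin N))).comp measurable_fst)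
            ((measurable_pi_apply j).comp measurable_snd))
      · exact hg.comp ((measurable_pi_apply j).comp measurable_snd)
    · exact (Finset.measurable_prod _ fun j _ =>
          hp0.comp ((measurable_pi_apply j).comp measurable_fst)).mul
        (Finset.measurable_prod _ fun j _ =>
          hg.comp ((measurable_pi_apply j).comp measurable_snd))
  -- ENNReal-level objects
  set D : ℝ → ℝ≥0∞ := fun x => ENNReal.ofReal (g x) with hDdef
  set P : ℝ → ℝ≥0∞ := fun x => ENNReal.ofReal (p0 x) with hPdef
  have hDmeas : Measurable D := hg.ennreal_ofReal
  have hPmeas : Measurable P := hp0.ennreal_ofReal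
  set u : ℝ → ℝ → ℝ := fun x0 x => pobs x * ptrans x0 x / g x with hudef
  have humeas : Measurable fun q : ℝ × ℝ => u q.1 q.2 :=
    ((hpobs.comp measurable_snd).mul hptrans).div (hg.comp measurable_snd)
  have hun : ∀ x0 x, 0 ≤ u x0 x := fun x0 x =>
    div_nonneg (mul_nonneg (hpobs0 _) (hptrans0 _ _)) (hg0 _)
  set J : ℝ → ℝ≥0∞ := fun x0 => ∫⁻ x, D x * ENNReal.ofReal (u x0 x) with hJdef
  have hJmeas : Measurable J := by
    apply Measurable.lintegral_prod_right'
      (f := fun q : ℝ × ℝ => D q.2 * ENNReal.ofReal (u q.1 q.2))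
    exact (hDmeas.comp measurable_snd).mul humeas.ennreal_ofReal
  -- integrability of densities
  have hgInt : Integrable g := by
    by_contra hcon
    rw [integral_undef hcon] at hgdens; norm_num at hgdens
  have hp0Int : Integrable p0 := by
    by_contra hcon
    rw [integral_undef hcon] at hp0dens; norm_num at hp0dens
  have hD1 : ∫⁻ x, D x = 1 := by
    have := ofReal_integral_eq_lintegral_ofReal hgInt (Filter.Eventually.of_forall hg0)
    rw [hgdens, ENNReal.ofReal_one] at this
    exact this.symm
  have hP1 : ∫⁻ x, P x = 1 := by
    have := ofReal_integral_eq_lintegral_ofReal hp0Int (Filter.Eventually.of_forall hp00)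
    rw [hp0dens, ENNReal.ofReal_one] at this
    exact this.symm
  -- inner lintegral
  set I : (Fin N → ℝ) → ℝ≥0∞ := fun a => ∫⁻ b, ENNReal.ofReal (F a b) with hIdef
  have hImeas : Measurable I := hFmeas.ennreal_ofReal.lintegral_prod_right'
  -- pointwise expansion
  have expand : ∀ a b, ENNReal.ofReal (F a b) =
      ∑ j : Fin N, ∑ l ∈ Finset.range L,
        (ENNReal.ofReal c * ∏ i, P (a i)) *
          ((∏ i, D (b i)) * ENNReal.ofReal (u (a (j + (l : Fin N))) (b j))) := by
    intro a b
    have hreal : F a b = ∑ j : Fin N, ∑ l ∈ Finset.range L,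
        (c * ∏ i, p0 (a i)) * ((∏ i, g (b i)) * u (a (j + (l : Fin N))) (b j)) := by
      rw [hFdef]
      dsimp only
      rw [Finset.sum_mul]
      refine Finset.sum_congr rfl fun j _ => ?_
      simp only [Finset.mul_sum, Finset.sum_div, Finset.sum_mul]
      refine Finset.sum_congr rfl fun l _ => ?_
      rw [hudef, hc]
      dsimp only
      ring
    rw [hreal]
    rw [ENNReal.ofReal_sum_of_nonneg (fun j _ => Finset.sum_nonneg fun l _ =>
      mul_nonneg (mul_nonneg hc0 (Finset.prod_nonneg fun i _ => hp00 _))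
        (mul_nonneg (Finset.prod_nonneg fun i _ => hg0 _) (hun _ _)))]
    refine Finset.sum_congr rfl fun j _ => ?_
    rw [ENNReal.ofReal_sum_of_nonneg (fun l _ =>
      mul_nonneg (mul_nonneg hc0 (Finset.prod_nonneg fun i _ => hp00 _))
        (mul_nonneg (Finset.prod_nonneg fun i _ => hg0 _) (hun _ _)))]
    refine Finset.sum_congr rfl fun l _ => ?_
    rw [ENNReal.ofReal_mul (mul_nonneg hc0 (Finset.prod_nonneg fun i _ => hp00 _)),
      ENNReal.ofReal_mul hc0,
      ENNReal.ofReal_mul (Finset.prod_nonneg fun i _ => hg0 _),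
      ENNReal.ofReal_prod_of_nonneg (fun i _ => hp00 _),
      ENNReal.ofReal_prod_of_nonneg (fun i _ => hg0 _)]
  -- measurability of summands in b
  have hmeasS2 : ∀ (a : Fin N → ℝ) (j : Fin N) (l : ℕ), Measurable fun b : Fin N → ℝ =>
      (ENNReal.ofReal c * ∏ i, P (a i)) *
        ((∏ i, D (b i)) * ENNReal.ofReal (u (a (j + (l : Fin N))) (b j))) := by
    intro a j l
    apply Measurable.mul measurable_const
    apply Measurable.mul
    · exact Finset.measurable_prod _ fun i _ => hDmeas.comp (measurable_pi_apply i)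
    · apply Measurable.ennreal_ofReal
      exact humeas.comp (measurable_const.prodMk (measurable_pi_apply j))
  -- compute I a
  have hIa : ∀ a, I a = ∑ j : Fin N, ∑ l ∈ Finset.range L,
      (ENNReal.ofReal c * ∏ i, P (a i)) * J (a (j + (l : Fin N))) := by
    intro a
    rw [hIdef]
    dsimp only
    simp_rw [expand a]
    rw [lintegral_finset_sum _ (fun j _ => Finset.measurable_sum _ fun l _ => hmeasS2 a j l)]
    refine Finset.sum_congr rfl fun j _ => ?_
    rw [lintegral_finset_sum _ (fun l _ => hmeasS2 a j l)]
    refine Finset.sum_congr rfl fun l _ => ?_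
    have hm : Measurable fun b : Fin N → ℝ =>
        (∏ i, D (b i)) * ENNReal.ofReal (u (a (j + (l : Fin N))) (b j)) := by
      apply Measurable.mul
      · exact Finset.measurable_prod _ fun i _ => hDmeas.comp (measurable_pi_apply i)
      · exact (humeas.comp (measurable_const.prodMk (measurable_pi_apply j))).ennreal_ofReal
    rw [lintegral_const_mul _ hm]
    congr 1
    exact lint_pi_marg D (fun x => ENNReal.ofReal (u (a (j + (l : Fin N))) x)) hDmeas
      ((humeas.comp (measurable_const.prodMk measurable_id)).ennreal_ofReal) hD1 j
  -- integrate over a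
  set M : ℝ≥0∞ := ∫⁻ x, P x * J x with hMdef
  have hofc : ENNReal.ofReal c = ((N : ℝ≥0∞))⁻¹ * ((L : ℝ≥0∞))⁻¹ := by
    rw [hc, ENNReal.ofReal_mul (by positivity),
      ENNReal.ofReal_inv_of_pos (by exact_mod_cast hNpos),
      ENNReal.ofReal_inv_of_pos (by exact_mod_cast hLpos),
      ENNReal.ofReal_natCast, ENNReal.ofReal_natCast]
  have hmeasA : ∀ (j : Fin N) (l : ℕ), Measurable fun a : Fin N → ℝ =>
      (ENNReal.ofReal c * ∏ i, P (a i)) * J (a (j + (l : Fin N))) := by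
    intro j l
    apply Measurable.mul
    · exact measurable_const.mul
        (Finset.measurable_prod _ fun i _ => hPmeas.comp (measurable_pi_apply i))
    · exact hJmeas.comp (measurable_pi_apply _)
  have hterm : ∀ (j : Fin N) (l : ℕ),
      ∫⁻ a : Fin N → ℝ, (ENNReal.ofReal c * ∏ i, P (a i)) * J (a (j + (l : Fin N)))
        = ENNReal.ofReal c * M := by
    intro j l
    have hre : ∀ a : Fin N → ℝ,
        (ENNReal.ofReal c * ∏ i, P (a i)) * J (a (j + (l : Fin N)))
          = ENNReal.ofReal c * ((∏ i, P (a i)) * J (a (j + (l : Fin N)))) := fun a => by ring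
    simp_rw [hre]
    have hm2 : Measurable fun a : Fin N → ℝ => (∏ i, P (a i)) * J (a (j + (l : Fin N))) :=
      (Finset.measurable_prod _ fun i _ =>
        hPmeas.comp (measurable_pi_apply i)).mul (hJmeas.comp (measurable_pi_apply _))
    rw [lintegral_const_mul _ hm2]
    rw [lint_pi_marg P J hPmeas hJmeas hP1 (j + (l : Fin N)), hMdef]
  have hIint : ∫⁻ a, I a = M := by
    simp_rw [hIa]
    rw [lintegral_finset_sum _ (fun j _ => Finset.measurable_sum _ fun l _ => hmeasA j l)]
    calc ∑ j : Fin N, ∫⁻ a : Fin N → ℝ, ∑ l ∈ Finset.range L,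
            (ENNReal.ofReal c * ∏ i, P (a i)) * J (a (j + (l : Fin N)))
        = ∑ j : Fin N, ∑ l ∈ Finset.range L, ∫⁻ a : Fin N → ℝ,
            (ENNReal.ofReal c * ∏ i, P (a i)) * J (a (j + (l : Fin N))) :=
          Finset.sum_congr rfl fun j _ =>
            lintegral_finset_sum _ (fun l _ => hmeasA j l)
      _ = ∑ j : Fin N, ∑ l ∈ Finset.range L, ENNReal.ofReal c * M :=
          Finset.sum_congr rfl fun j _ => Finset.sum_congr rfl fun l _ => hterm j l
      _ = (N : ℝ≥0∞) * ((L : ℝ≥0∞) * (ENNReal.ofReal c * M)) := by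
          simp only [Finset.sum_const, Finset.card_range, Finset.card_univ, Fintype.card_fin,
            nsmul_eq_mul]
      _ = M := by
          rw [hofc]
          have hN' : (N : ℝ≥0∞) ≠ 0 := Nat.cast_ne_zero.2 (NeZero.ne N)
          have hL' : (L : ℝ≥0∞) ≠ 0 := Nat.cast_ne_zero.2 hLpos.ne'
          calc (N : ℝ≥0∞) * ((L : ℝ≥0∞) * (((N : ℝ≥0∞))⁻¹ * ((L : ℝ≥0∞))⁻¹ * M))
              = ((N : ℝ≥0∞) * ((N : ℝ≥0∞))⁻¹) * (((L : ℝ≥0∞) * ((L : ℝ≥0∞))⁻¹) * M) := by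
                ring
            _ = M := by
                rw [ENNReal.mul_inv_cancel hN' (ENNReal.natCast_ne_top N),
                  ENNReal.mul_inv_cancel hL' (ENNReal.natCast_ne_top L), one_mul, one_mul]
  -- identify M with the target double lintegral
  have hmf : Measurable fun q : ℝ × ℝ =>
      ENNReal.ofReal (pobs q.2 * ptrans q.1 q.2 * p0 q.1) :=
    (((hpobs.comp measurable_snd).mul hptrans).mul (hp0.comp measurable_fst)).ennreal_ofReal
  have hMT : M = ∫⁻ q : ℝ × ℝ, ENNReal.ofReal (pobs q.2 * ptrans q.1 q.2 * p0 q.1) := by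
    have hj : Measurable fun q : ℝ × ℝ => P q.1 * (D q.2 * ENNReal.ofReal (u q.1 q.2)) :=
      (hPmeas.comp measurable_fst).mul
        ((hDmeas.comp measurable_snd).mul humeas.ennreal_ofReal)
    have h1 : M = ∫⁻ x, ∫⁻ y, P x * (D y * ENNReal.ofReal (u x y)) := by
      rw [hMdef]
      refine lintegral_congr fun x => ?_
      rw [hJdef]
      dsimp only
      exact (lintegral_const_mul _
        ((hDmeas.mul ((humeas.comp (measurable_const.prodMk measurable_id)).ennreal_ofReal)))).symm
    rw [h1, lintegral_lintegral_swap hj.aemeasurable]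
    have hslice : ∀ᵐ y : ℝ, Integrable fun x => pobs y * ptrans x y * p0 x := by
      have hsw : Integrable
          ((fun q : ℝ × ℝ => pobs q.2 * ptrans q.1 q.2 * p0 q.1) ∘ Prod.swap)
          ((volume : Measure ℝ).prod (volume : Measure ℝ)) := hfin.swap
      have := hsw.prod_right_ae
      filter_upwards [this] with y hy
      exact hy
    have hAB : ∀ᵐ y : ℝ, (∫⁻ x, P x * (D y * ENNReal.ofReal (u x y)))
        = ∫⁻ x, ENNReal.ofReal (pobs y * ptrans x y * p0 x) := by
      filter_upwards [hslice] with y hy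
      rcases eq_or_lt_of_le (hg0 y) with hgy | hgy
      · have hDy : D y = 0 := by rw [hDdef]; simp [← hgy]
        rw [hDy]
        simp only [zero_mul, mul_zero, lintegral_zero]
        symm
        by_cases hpy : pobs y = 0
        · simp [hpy]
        · have hpy' : 0 < pobs y := lt_of_le_of_ne (hpobs0 y) (Ne.symm hpy)
          have hnot : ¬ (0 < pobs y * ∫ x, ptrans x y * p0 x) := by
            intro hlt
            exact absurd (hgpos y hlt) (by rw [← hgy]; exact lt_irrefl 0)
          have hint0 : ∫ x, ptrans x y * p0 x = 0 := by
            have hnn : 0 ≤ ∫ x, ptrans x y * p0 x :=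
              integral_nonneg fun x => mul_nonneg (hptrans0 _ _) (hp00 _)
            rcases hnn.lt_or_eq with hlt | heq
            · exact absurd (mul_pos hpy' hlt) hnot
            · exact heq.symm
          have hInt2 : Integrable fun x : ℝ => ptrans x y * p0 x := by
            have hfx : (fun x : ℝ => ptrans x y * p0 x)
                = fun x => (pobs y)⁻¹ * (pobs y * ptrans x y * p0 x) := by
              funext x; field_simp
            rw [hfx]
            exact hy.const_mul _
          have haez : ∀ᵐ x : ℝ, ptrans x y * p0 x = 0 := by
            have := (integral_eq_zero_iff_of_nonneg
              (fun x => mul_nonneg (hptrans0 _ _) (hp00 _)) hInt2).1 hint0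
            filter_upwards [this] with x hx
            exact hx
          calc ∫⁻ x, ENNReal.ofReal (pobs y * ptrans x y * p0 x)
              = ∫⁻ _x : ℝ, (0 : ℝ≥0∞) := by
                refine lintegral_congr_ae ?_
                filter_upwards [haez] with x hx
                rw [mul_assoc, hx, mul_zero, ENNReal.ofReal_zero]
            _ = 0 := lintegral_zero
      · refine lintegral_congr fun x => ?_
        rw [hPdef, hDdef, hudef]
        dsimp only
        rw [← ENNReal.ofReal_mul (hg0 y), ← ENNReal.ofReal_mul (hp00 x)]
        congr 1
        field_simp
    rw [lintegral_congr_ae hAB]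
    have h2 : (∫⁻ q : ℝ × ℝ, ENNReal.ofReal (pobs q.2 * ptrans q.1 q.2 * p0 q.1))
        = ∫⁻ x : ℝ, ∫⁻ y : ℝ, ENNReal.ofReal (pobs y * ptrans x y * p0 x) :=
      lintegral_prod _ hmf.aemeasurable
    rw [h2]
    exact (lintegral_lintegral_swap hmf.aemeasurable).symm
  have hTne : (∫⁻ q : ℝ × ℝ, ENNReal.ofReal (pobs q.2 * ptrans q.1 q.2 * p0 q.1)) ≠ ⊤ := by
    have := (hasFiniteIntegral_iff_ofReal (Filter.Eventually.of_forall fun q =>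
      mul_nonneg (mul_nonneg (hpobs0 _) (hptrans0 _ _)) (hp00 _))).1 hfin.2
    exact this.ne
  have hMne : M ≠ ⊤ := by rw [hMT]; exact hTne
  -- the right-hand side
  have hRHS : (∫ x0 : ℝ, ∫ x1 : ℝ, pobs x1 * ptrans x0 x1 * p0 x0)
      = (∫⁻ q : ℝ × ℝ, ENNReal.ofReal (pobs q.2 * ptrans q.1 q.2 * p0 q.1)).toReal := by
    have h1 : (∫ x0 : ℝ, ∫ x1 : ℝ, pobs x1 * ptrans x0 x1 * p0 x0)
        = ∫ q : ℝ × ℝ, pobs q.2 * ptrans q.1 q.2 * p0 q.1 :=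
      integral_integral (f := fun x0 x1 => pobs x1 * ptrans x0 x1 * p0 x0) hfin
    rw [h1]
    exact integral_eq_lintegral_of_nonneg_ae (Filter.Eventually.of_forall fun q =>
      mul_nonneg (mul_nonneg (hpobs0 _) (hptrans0 _ _)) (hp00 _)) hfin.1
  -- assemble
  calc ∫ a : Fin N → ℝ, ∫ b : Fin N → ℝ,
        (∑ j : Fin N, (N : ℝ)⁻¹ * pobs (b j) *
            ((L : ℝ)⁻¹ * ∑ l ∈ Finset.range L, ptrans (a (j + (l : Fin N))) (b j))
              / g (b j)) *
          ((∏ j : Fin N, p0 (a j)) * ∏ j : Fin N, g (b j))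
      = ∫ a : Fin N → ℝ, (I a).toReal := by
        refine integral_congr_ae (Filter.Eventually.of_forall fun a => ?_)
        exact integral_eq_lintegral_of_nonneg_ae (Filter.Eventually.of_forall (hFnn a))
          ((hFmeas.comp measurable_prodMk_left).aestronglyMeasurable)
    _ = (∫⁻ a, I a).toReal :=
        integral_toReal hImeas.aemeasurable
          (ae_lt_top hImeas (by rw [hIint]; exact hMne))
    _ = M.toReal := by rw [hIint]
    _ = (∫⁻ q : ℝ × ℝ, ENNReal.ofReal (pobs q.2 * ptrans q.1 q.2 * p0 q.1)).toReal := by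
        rw [hMT]
    _ = ∫ x0 : ℝ, ∫ x1 : ℝ, pobs x1 * ptrans x0 x1 * p0 x0 := hRHS.symm
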